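/- Converse direction of the solvability criterion: if for every f ∈ K there exists u_f ∈ H with ⟨u_f, Tv⟩ = ⟨f, v⟩ for all v ∈ D, then there exists a constant C such that ‖v‖_{K₋} ≤ C‖Tv‖_{H₋} for all v ∈ D with Tv ≠ 0. (Proved via the Banach–Steinhaus uniform boundedness principle.) -/
import Mathlib


open scoped RealInnerProductSpace

/-- The negative norm `‖w‖₋ = sup {|⟪j z, w⟫_X| : z, ‖z‖ ≤ 1}` associated to a
continuous embedding `j` of a Hilbert space into `X`. -/
noncomputable def negNorm {H X : Type*} [NormedAddCommGroup H] [InnerProductSpace ℝ H]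
    [NormedAddCommGroup X] [InnerProductSpace ℝ X] (j : H →L[ℝ] X) (w : X) : ℝ :=
  sSup {r : ℝ | ∃ z : H, ‖z‖ ≤ 1 ∧ r = |⟪j z, w⟫|}

section aux

variable {H X : Type*} [NormedAddCommGroup H] [InnerProductSpace ℝ H]
    [NormedAddCommGroup X] [InnerProductSpace ℝ X] (j : H →L[ℝ] X) (w : X)

lemma negNorm_bddAbove : BddAbove {r : ℝ | ∃ z : H, ‖z‖ ≤ 1 ∧ r = |⟪j z, w⟫|} := by
  refine ⟨‖j‖ * ‖w‖, ?_⟩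
  rintro r ⟨z, hz, rfl⟩
  calc |⟪j z, w⟫| ≤ ‖j z‖ * ‖w‖ := abs_real_inner_le_norm _ _
    _ ≤ ‖j‖ * ‖w‖ := by
        gcongr
        calc ‖j z‖ ≤ ‖j‖ * ‖z‖ := j.le_opNorm z
          _ ≤ ‖j‖ * 1 := by gcongr
          _ = ‖j‖ := mul_one _

lemma zero_mem_negNorm_set : (0 : ℝ) ∈ {r : ℝ | ∃ z : H, ‖z‖ ≤ 1 ∧ r = |⟪j z, w⟫|} := by
  refine ⟨0, by simp, by simp⟩

lemma negNorm_nonneg : 0 ≤ negNorm j w :=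
  le_csSup (negNorm_bddAbove j w) (zero_mem_negNorm_set j w)

lemma abs_inner_le_negNorm (u : H) : |⟪j u, w⟫| ≤ ‖u‖ * negNorm j w := by
  rcases eq_or_ne u 0 with rfl | hu
  · simp
  · have hn : 0 < ‖u‖ := norm_pos_iff.mpr hu
    have hz : ‖(‖u‖⁻¹ • u : H)‖ ≤ 1 := by
      rw [norm_smul, norm_inv, norm_norm, inv_mul_cancel₀ hn.ne']
    have hmem : |⟪j (‖u‖⁻¹ • u), w⟫| ∈ {r : ℝ | ∃ z : H, ‖z‖ ≤ 1 ∧ r = |⟪j z, w⟫|} :=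
      ⟨_, hz, rfl⟩
    have hle : |⟪j (‖u‖⁻¹ • u), w⟫| ≤ negNorm j w :=
      le_csSup (negNorm_bddAbove j w) hmem
    have : |⟪j (‖u‖⁻¹ • u), w⟫| = ‖u‖⁻¹ * |⟪j u, w⟫| := by
      rw [map_smul, real_inner_smul_left, abs_mul, abs_inv, abs_norm]
    rw [this] at hle
    calc |⟪j u, w⟫| = ‖u‖ * (‖u‖⁻¹ * |⟪j u, w⟫|) := by
          field_simp
      _ ≤ ‖u‖ * negNorm j w := by gcongr

end aux

/-- Converse direction of the solvability criterion: if for every `f ∈ K` there is a weak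
solution `u_f ∈ H` of `⟪u_f, T v⟫ = ⟪f, v⟫` for all `v ∈ D`, then there is a constant `C`
with `‖v‖_{K₋} ≤ C ‖T v‖_{H₋}` for all `v ∈ D` with `‖T v‖_{H₋} ≠ 0`. -/
theorem solvability_converse
    {X H K : Type*} [NormedAddCommGroup X] [InnerProductSpace ℝ X]
    [NormedAddCommGroup H] [InnerProductSpace ℝ H] [CompleteSpace H]
    [NormedAddCommGroup K] [InnerProductSpace ℝ K] [CompleteSpace K]
    (jH : H →L[ℝ] X) (jK : K →L[ℝ] X)
    (hH : DenseRange jH) (hK : DenseRange jK)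
    (D : Submodule ℝ X) (T : D →ₗ[ℝ] X)
    (hsolve : ∀ f : K, ∃ u : H, ∀ v : D, ⟪jH u, T v⟫ = ⟪jK f, (v : X)⟫) :
    ∃ C : ℝ, ∀ v : D, negNorm jH (T v) ≠ 0 →
      negNorm jK (v : X) ≤ C * negNorm jH (T v) := by
  set ι := {v : D // negNorm jH (T v) ≠ 0} with hι
  have hNpos : ∀ v : ι, 0 < negNorm jH (T v.1) := fun v =>
    lt_of_le_of_ne (negNorm_nonneg jH _) (Ne.symm v.2)
  set g : ι → K →L[ℝ] ℝ := fun v =>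
    (negNorm jH (T v.1))⁻¹ • ((innerSL ℝ ((v.1 : D) : X)).comp jK) with hg
  have hgval : ∀ (v : ι) (f : K), g v f = (negNorm jH (T v.1))⁻¹ * ⟪jK f, ((v.1 : D) : X)⟫ := by
    intro v f
    simp [hg, real_inner_comm]
  have hpt : ∀ f : K, ∃ C : ℝ, ∀ v : ι, ‖g v f‖ ≤ C := by
    intro f
    obtain ⟨u, hu⟩ := hsolve f
    refine ⟨‖u‖, fun v => ?_⟩
    have hN := hNpos v
    rw [hgval, ← hu v.1]
    rw [Real.norm_eq_abs, abs_mul, abs_inv, abs_of_pos hN]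
    calc (negNorm jH (T v.1))⁻¹ * |⟪jH u, T v.1⟫|
        ≤ (negNorm jH (T v.1))⁻¹ * (‖u‖ * negNorm jH (T v.1)) := by
          gcongr _ * ?_
          exact abs_inner_le_negNorm jH _ u
      _ = ‖u‖ := by field_simp
  obtain ⟨C, hC⟩ := banach_steinhaus hpt
  refine ⟨C, fun v hv => ?_⟩
  have hN : 0 < negNorm jH (T v) := hNpos ⟨v, hv⟩
  refine csSup_le ⟨0, zero_mem_negNorm_set jK (v : X)⟩ ?_
  rintro r ⟨f, hf, rfl⟩
  have h1 : ‖g ⟨v, hv⟩ f‖ ≤ C := by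
    calc ‖g ⟨v, hv⟩ f‖ ≤ ‖g ⟨v, hv⟩‖ * ‖f‖ := (g ⟨v, hv⟩).le_opNorm f
      _ ≤ C * 1 := by
          gcongr
          · exact (norm_nonneg _).trans (hC ⟨v, hv⟩)
          · exact hC ⟨v, hv⟩
      _ = C := mul_one C
  have h2 : ‖g ⟨v, hv⟩ f‖ = (negNorm jH (T v))⁻¹ * |⟪jK f, (v : X)⟫| := by
    rw [hgval, Real.norm_eq_abs, abs_mul, abs_inv, abs_of_pos hN]
  rw [h2] at h1
  calc |⟪jK f, (v : X)⟫|
      = negNorm jH (T v) * ((negNorm jH (T v))⁻¹ * |⟪jK f, (v : X)⟫|) := by field_simp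
    _ ≤ negNorm jH (T v) * C := by gcongr
    _ = C * negNorm jH (T v) := mul_comm _ _
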